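/- Let A be a maximally dissipative operator on H with boundary operator Γ. Then for every u ∈ H, sup_{ε>0} ∫_ℝ ‖Γ(A − k + iε)^{-1}u‖²_E dk ≤ 2π‖u‖²_H. Consequently, the E-valued analytic function z ↦ Γ(A − z)^{-1}u on the lower half-plane belongs to the vector-valued Hardy class H₂⁻(E). -/

import Mathlib

open Complex MeasureTheory

noncomputable section

variable {H : Type*} [NormedAddCommGroup H] [InnerProductSpace ℂ H] [CompleteSpace H]

local notation "⟪" x ", " y "⟫" => @inner ℂ _ _ x y

/-- `A` is dissipative: densely defined with `Im ⟨Au,u⟩ ≥ 0`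
(the paper's inner product is linear in the first slot, so `⟨Au,u⟩ = ⟪u, Au⟫` in
Mathlib's convention). -/
def IsDissipative (A : H →ₗ.[ℂ] H) : Prop :=
  Dense (A.domain : Set H) ∧ ∀ u : A.domain, 0 ≤ (⟪(u : H), A u⟫).im

/-- Maximally dissipative: dissipative with no nontrivial dissipative extension. -/
def IsMaxDissipative (A : H →ₗ.[ℂ] H) : Prop :=
  IsDissipative A ∧ ∀ B : H →ₗ.[ℂ] H, IsDissipative B → A ≤ B → B = A

/-- `R` is the everywhere-defined bounded resolvent `(A - z)⁻¹` of `A`. -/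
def IsResolventAt (A : H →ₗ.[ℂ] H) (z : ℂ) (R : H →L[ℂ] H) : Prop :=
  (∀ u : A.domain, R (A u - z • (u : H)) = (u : H)) ∧
  ∀ h : H, ∃ u : A.domain, (u : H) = R h ∧ A u - z • (u : H) = h


section HardyAux

open Real Filter

namespace HardyAux


lemma one_sub_cos_pos {θ : ℝ} (h1 : 0 < θ) (h2 : θ < 2*π) : 0 < 1 - Real.cos θ := by
  have hne : Real.cos θ ≠ 1 := by
    intro h
    have := (Real.cos_eq_one_iff_of_lt_of_lt (by linarith [Real.pi_pos]) h2).1 h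
    linarith
  have := Real.cos_le_one θ
  cases this.lt_or_eq with
  | inl h => linarith
  | inr h => exact absurd h hne

/-- The Möbius transform of the unit disc onto the lower half plane, scaled by `R`. -/
def psi (R : ℝ) (w : ℂ) : ℂ := -Complex.I * R * ((1 + w)/(1 - w))

lemma psi_differentiableAt {R : ℝ} {w : ℂ} (hw : w ≠ 1) : DifferentiableAt ℂ (psi R) w := by
  have h : (1 : ℂ) - w ≠ 0 := sub_ne_zero.mpr (Ne.symm hw)
  exact (differentiableAt_const _).mul
    (((differentiableAt_const _).add differentiableAt_id).div
      ((differentiableAt_const _).sub differentiableAt_id) h)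

lemma coef_re (R : ℝ) : (-Complex.I * (R:ℂ)).re = 0 := by simp
lemma coef_im (R : ℝ) : (-Complex.I * (R:ℂ)).im = -R := by simp

lemma psi_re (R : ℝ) (w : ℂ) : (psi R w).re = R * ((1 + w)/(1 - w)).im := by
  have : psi R w = (-Complex.I * (R:ℂ)) * ((1 + w)/(1 - w)) := rfl
  rw [this, Complex.mul_re, coef_re, coef_im]; ring

lemma psi_im (R : ℝ) (w : ℂ) : (psi R w).im = -R * ((1 + w)/(1 - w)).re := by
  have : psi R w = (-Complex.I * (R:ℂ)) * ((1 + w)/(1 - w)) := rfl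
  rw [this, Complex.mul_im, coef_re, coef_im]; ring

lemma psi_im_neg {R : ℝ} (hR : 0 < R) {w : ℂ} (hw : ‖w‖ < 1) : (psi R w).im < 0 := by
  have hw1 : w ≠ 1 := by rintro rfl; simp at hw
  have h : (1 : ℂ) - w ≠ 0 := sub_ne_zero.mpr (Ne.symm hw1)
  have hns : 0 < Complex.normSq (1 - w) := Complex.normSq_pos.mpr h
  have hre : ((1 + w)/(1 - w)).re = (1 - Complex.normSq w) / Complex.normSq (1 - w) := by
    rw [Complex.div_re]
    simp only [Complex.add_re, Complex.add_im, Complex.sub_re, Complex.sub_im,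
      Complex.one_re, Complex.one_im, Complex.normSq_apply]
    ring_nf
  have hlt : Complex.normSq w < 1 := by
    have h2 : Complex.normSq w = ‖w‖^2 := by
      rw [Complex.normSq_eq_norm_sq]
    nlinarith [norm_nonneg w]
  rw [psi_im, hre]
  have : 0 < (1 - Complex.normSq w) / Complex.normSq (1 - w) := div_pos (by linarith) hns
  nlinarith

lemma exp_re' (θ : ℝ) : (Complex.exp (θ * Complex.I)).re = Real.cos θ := by
  simp [Complex.exp_re]

lemma exp_im' (θ : ℝ) : (Complex.exp (θ * Complex.I)).im = Real.sin θ := by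
  simp [Complex.exp_im]

lemma exp_ne_one {θ : ℝ} (h1 : 0 < θ) (h2 : θ < 2*π) : Complex.exp (θ * Complex.I) ≠ 1 := by
  intro h
  have hc : Real.cos θ = 1 := by rw [← exp_re' θ, h]; simp
  have := (Real.cos_eq_one_iff_of_lt_of_lt (by linarith [Real.pi_pos]) h2).1 hc
  linarith

lemma psi_boundary {R : ℝ} {θ : ℝ} (h1 : 0 < θ) (h2 : θ < 2*π) :
    psi R (Complex.exp (θ * Complex.I)) = ((R * (Real.sin θ / (1 - Real.cos θ)) : ℝ) : ℂ) := by
  have hcos := one_sub_cos_pos h1 h2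
  set e := Complex.exp (θ * Complex.I) with he
  have h : (1 : ℂ) - e ≠ 0 := sub_ne_zero.mpr (Ne.symm (exp_ne_one h1 h2))
  have hz_re : ((1:ℂ) + e).re = 1 + Real.cos θ := by simp [he, exp_re']
  have hz_im : ((1:ℂ) + e).im = Real.sin θ := by simp [he, exp_im']
  have hw_re : ((1:ℂ) - e).re = 1 - Real.cos θ := by simp [he, exp_re']
  have hw_im : ((1:ℂ) - e).im = -Real.sin θ := by simp [he, exp_im']
  have hns : Complex.normSq (1 - e) = 2 * (1 - Real.cos θ) := by
    rw [Complex.normSq_apply, hw_re, hw_im]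
    nlinarith [Real.sin_sq_add_cos_sq θ]
  have hζre : (((1:ℂ) + e)/((1:ℂ) - e)).re = 0 := by
    rw [Complex.div_re, hz_re, hz_im, hw_re, hw_im, hns]
    rw [← add_div, div_eq_zero_iff]
    left
    nlinarith [Real.sin_sq_add_cos_sq θ]
  have hζim : (((1:ℂ) + e)/((1:ℂ) - e)).im = Real.sin θ / (1 - Real.cos θ) := by
    rw [Complex.div_im, hz_re, hz_im, hw_re, hw_im, hns]
    rw [div_sub_div_same]
    rw [show Real.sin θ * (1 - Real.cos θ) - (1 + Real.cos θ) * -Real.sin θ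
        = Real.sin θ * 2 by ring]
    rw [eq_div_iff hcos.ne']
    field_simp
  apply Complex.ext
  · rw [psi_re, hζim, Complex.ofReal_re]
  · rw [psi_im, hζre, Complex.ofReal_im]
    ring



lemma circle_avg {f : ℂ → ℂ} (hf : DifferentiableOn ℂ f (Metric.ball 0 1))
    {ρ : ℝ} (h0 : 0 < ρ) (h1 : ρ < 1) :
    ∫ θ in (0:ℝ)..(2*π), f ((ρ:ℂ) * Complex.exp (θ * Complex.I)) = (2*π : ℝ) • f 0 := by
  have hcl : DiffContOnCl ℂ f (Metric.ball (0:ℂ) ρ) := by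
    apply DifferentiableOn.diffContOnCl
    rw [closure_ball (0:ℂ) h0.ne']
    exact hf.mono (Metric.closedBall_subset_ball h1)
  have hkey := hcl.circleIntegral_sub_inv_smul (w := 0) (Metric.mem_ball_self h0)
  rw [circleIntegral] at hkey
  have hint : ∀ θ : ℝ, deriv (circleMap 0 ρ) θ •
      ((circleMap 0 ρ θ - 0)⁻¹ • f (circleMap 0 ρ θ))
      = Complex.I * f (circleMap 0 ρ θ) := by
    intro θ
    have hne : circleMap 0 ρ θ ≠ 0 := circleMap_ne_center h0.ne'
    rw [deriv_circleMap]
    simp only [smul_eq_mul, sub_zero]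
    field_simp
  rw [intervalIntegral.integral_congr (fun θ _ => hint θ)] at hkey
  rw [intervalIntegral.integral_const_mul] at hkey
  have hmap : ∀ θ : ℝ, circleMap 0 ρ θ = (ρ:ℂ) * Complex.exp (θ * Complex.I) := by
    intro θ; simp [circleMap]
  have h2 : (2 * ↑π * Complex.I) • f 0 = Complex.I * ((2*π:ℝ) • f 0) := by
    simp [smul_eq_mul]; ring
  rw [h2] at hkey
  have := mul_left_cancel₀ Complex.I_ne_zero hkey
  rw [← this]
  exact intervalIntegral.integral_congr (fun θ _ => by rw [hmap θ])


/-- Key Poisson-type bound: a function holomorphic on the lower half-plane with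
nonpositive imaginary part and bound `C/|Im z|` has boundary integrals bounded by `πC`. -/
theorem poisson_bound {m : ℂ → ℂ} {C : ℝ}
    (hm : ∀ z : ℂ, z.im < 0 → DifferentiableAt ℂ m z)
    (him : ∀ z : ℂ, z.im < 0 → (m z).im ≤ 0)
    (hbd : ∀ z : ℂ, z.im < 0 → ‖m z‖ ≤ C / (-z.im))
    {ε : ℝ} (hε : 0 < ε) :
    ∫⁻ x : ℝ, ENNReal.ofReal (-(m ((x : ℂ) - ε * Complex.I)).im)
      ≤ ENNReal.ofReal (π * C) := by
  have hC : 0 ≤ C := by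
    have h := hbd (-Complex.I) (by simp)
    simpa using (norm_nonneg _).trans h
  set w₀ : ℝ → ℝ := fun x => -(m ((x:ℂ) - ε * Complex.I)).im with hw₀
  have himarg : ∀ x : ℝ, ((x:ℂ) - ε * Complex.I).im < 0 := by
    intro x; simp [hε]
  have hw₀nonneg : ∀ x, 0 ≤ w₀ x := by
    intro x; have := him _ (himarg x); simp [hw₀]; linarith
  have hw₀cont : Continuous w₀ := by
    rw [continuous_iff_continuousAt]
    intro x
    have h1 : ContinuousAt (fun x : ℝ => (x:ℂ) - ε * Complex.I) x :=
      (Complex.continuous_ofReal.continuousAt).sub continuousAt_const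
    have h2 : ContinuousAt m ((x:ℂ) - ε * Complex.I) := (hm _ (himarg x)).continuousAt
    have h3 : ContinuousAt (m ∘ fun x : ℝ => (x:ℂ) - ε * Complex.I) x :=
      ContinuousAt.comp h2 h1
    rw [show (m ∘ fun x : ℝ => (x:ℂ) - ε * Complex.I)
        = fun x : ℝ => m ((x:ℂ) - ε * Complex.I) from rfl] at h3
    have h4 : ContinuousAt (Complex.im ∘ fun x : ℝ => m ((x:ℂ) - ε * Complex.I)) x :=
      ContinuousAt.comp Complex.continuous_im.continuousAt h3
    exact ContinuousAt.neg h4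
  -- main bound for every R > 0
  have main : ∀ R : ℝ, 0 < R →
      (∫⁻ x : ℝ, ENNReal.ofReal (w₀ x) * ENNReal.ofReal (2*R/(x^2+R^2)))
        ≤ ENNReal.ofReal (2*π*C/(R+ε)) := by
    intro R hR
    -- the transplanted function on the disc
    set f : ℂ → ℂ := fun w => m (psi R w - (ε:ℂ) * Complex.I) with hfdef
    have hargim : ∀ w : ℂ, ‖w‖ < 1 → (psi R w - (ε:ℂ) * Complex.I).im < 0 := by
      intro w hw
      have h1 := psi_im_neg hR hw
      have h2 : ((ε:ℂ) * Complex.I).im = ε := by simp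
      rw [Complex.sub_im, h2]
      linarith
    have hfAt : ∀ w : ℂ, ‖w‖ < 1 → DifferentiableAt ℂ f w := by
      intro w hw
      have h1 : w ≠ 1 := by rintro rfl; simp at hw
      have hpsi : DifferentiableAt ℂ (fun w => psi R w - (ε:ℂ)*Complex.I) w :=
        (psi_differentiableAt h1).sub_const _
      exact (hm _ (hargim w hw)).comp w hpsi
    have hfd : DifferentiableOn ℂ f (Metric.ball 0 1) := by
      intro w hw
      have : ‖w‖ < 1 := by simpa [Metric.mem_ball] using hw
      exact (hfAt w this).differentiableWithinAt
    -- radii increasing to 1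
    set ρ : ℕ → ℝ := fun n => 1 - 1/(n+2) with hρdef
    have hρ0 : ∀ n : ℕ, 0 < ρ n := by
      intro n
      have h1 : (1:ℝ)/(n+2) < 1 := by
        rw [div_lt_one (by positivity)]
        have : (0:ℝ) ≤ n := Nat.cast_nonneg n
        linarith
      simp only [hρdef]
      linarith
    have hρ1 : ∀ n : ℕ, ρ n < 1 := by
      intro n
      have : 0 < (1:ℝ)/(n+2) := by positivity
      simp only [hρdef]
      linarith
    have hρlim : Tendsto ρ atTop (nhds 1) := by
      have h1 : Tendsto (fun n : ℕ => (n:ℝ)+2) atTop atTop :=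
        tendsto_atTop_add_const_right _ 2 tendsto_natCast_atTop_atTop
      have h2 : Tendsto (fun n : ℕ => ((n:ℝ)+2)⁻¹) atTop (nhds 0) := h1.inv_tendsto_atTop
      have h3 : Tendsto (fun n : ℕ => 1 - ((n:ℝ)+2)⁻¹) atTop (nhds (1 - 0)) :=
        tendsto_const_nhds.sub h2
      simpa [hρdef, one_div] using h3
    have hnorm_lt : ∀ (n : ℕ) (θ : ℝ), ‖(ρ n : ℂ) * Complex.exp (θ * Complex.I)‖ < 1 := by
      intro n θ
      rw [norm_mul, Complex.norm_exp_ofReal_mul_I, mul_one, Complex.norm_real]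
      rw [Real.norm_eq_abs, abs_of_pos (hρ0 n)]
      exact hρ1 n
    set g : ℕ → ℝ → ℝ := fun n θ => -(f ((ρ n : ℂ) * Complex.exp (θ * Complex.I))).im with hgdef
    have hgnonneg : ∀ n θ, 0 ≤ g n θ := by
      intro n θ
      have := him _ (hargim _ (hnorm_lt n θ))
      simp only [hgdef, hfdef]
      linarith
    have hgcont : ∀ n, Continuous (g n) := by
      intro n
      rw [continuous_iff_continuousAt]
      intro θ
      have hc1 : ContinuousAt (fun θ : ℝ => (ρ n : ℂ) * Complex.exp (θ * Complex.I)) θ := by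
        fun_prop
      have hc2 : ContinuousAt f ((ρ n : ℂ) * Complex.exp (θ * Complex.I)) :=
        (hfAt _ (hnorm_lt n θ)).continuousAt
      have hc3 : ContinuousAt (f ∘ fun θ : ℝ => (ρ n : ℂ) * Complex.exp (θ * Complex.I)) θ :=
        ContinuousAt.comp hc2 hc1
      have hc4 : ContinuousAt (Complex.im ∘ f ∘ fun θ : ℝ => (ρ n : ℂ) * Complex.exp (θ * Complex.I)) θ :=
        ContinuousAt.comp Complex.continuous_im.continuousAt hc3
      exact ContinuousAt.neg hc4
    -- value at the center
    have hf0 : -(f 0).im ≤ C/(R+ε) := by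
      have hpsi0 : psi R 0 = -Complex.I * R := by
        simp [psi]
      have h0 : psi R 0 - (ε:ℂ)*Complex.I = -(((R+ε):ℝ):ℂ) * Complex.I := by
        rw [hpsi0]; push_cast; ring
      have him0 : (psi R 0 - (ε:ℂ)*Complex.I).im < 0 := hargim 0 (by simp)
      have hb := hbd _ him0
      have himval : (psi R 0 - (ε:ℂ)*Complex.I).im = -(R+ε) := by
        rw [h0]; simp
      have habs : -(f 0).im ≤ ‖f 0‖ := by
        have h1 := Complex.abs_im_le_norm (f 0)
        have h2 : ‖f 0‖ = ‖f 0‖ := rfl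
        rw [h2]
        cases abs_cases (f 0).im with
        | inl h => linarith [h.1]
        | inr h => linarith [h.1]
      calc -(f 0).im ≤ ‖f 0‖ := habs
        _ ≤ C / (-(psi R 0 - (ε:ℂ)*Complex.I).im) := hb
        _ = C/(R+ε) := by rw [himval]; ring_nf
    -- circle average identity
    have hgid : ∀ n, ∫ θ in (0:ℝ)..(2*π), g n θ = 2*π*(-(f 0).im) := by
      intro n
      have hca := circle_avg hfd (hρ0 n) (hρ1 n)
      have hInt : IntegrableOn (fun θ : ℝ => f ((ρ n:ℂ) * Complex.exp (θ * Complex.I)))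
          (Set.Ioc 0 (2*π)) := by
        apply Continuous.integrableOn_Ioc
        rw [continuous_iff_continuousAt]
        intro θ
        have hc1 : ContinuousAt (fun θ : ℝ => (ρ n : ℂ) * Complex.exp (θ * Complex.I)) θ := by
          fun_prop
        have hc3 : ContinuousAt (f ∘ fun θ : ℝ => (ρ n : ℂ) * Complex.exp (θ * Complex.I)) θ :=
          ContinuousAt.comp (hfAt _ (hnorm_lt n θ)).continuousAt hc1
        exact hc3
      have h1 : ∫ θ in (0:ℝ)..(2*π), g n θ
          = -(∫ θ in (0:ℝ)..(2*π), (f ((ρ n:ℂ) * Complex.exp (θ * Complex.I))).im) := by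
        rw [← intervalIntegral.integral_neg]
      have h2 : ∫ θ in (0:ℝ)..(2*π), (f ((ρ n:ℂ) * Complex.exp (θ * Complex.I))).im
          = (∫ θ in (0:ℝ)..(2*π), f ((ρ n:ℂ) * Complex.exp (θ * Complex.I))).im := by
        rw [intervalIntegral.integral_of_le (by positivity),
            intervalIntegral.integral_of_le (by positivity)]
        simpa [RCLike.im_eq_complex_im] using (_root_.integral_im hInt)
      rw [h1, h2, hca]
      have : ((2*π : ℝ) • f 0).im = (2*π) * (f 0).im := by
        rw [Complex.real_smul, Complex.mul_im]
        simp
      rw [this]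
      ring
    -- lintegral bound on the circle of radius ρ n
    have hIoo : ∀ n, (∫⁻ θ in Set.Ioo 0 (2*π), ENNReal.ofReal (g n θ))
        ≤ ENNReal.ofReal (2*π*C/(R+ε)) := by
      intro n
      have hint : IntegrableOn (g n) (Set.Ioo 0 (2*π)) :=
        ((hgcont n).integrableOn_Icc).mono_set Set.Ioo_subset_Icc_self
      rw [← MeasureTheory.ofReal_integral_eq_lintegral_ofReal hint
          (ae_of_all _ fun θ => hgnonneg n θ)]
      apply ENNReal.ofReal_le_ofReal
      have heq : ∫ θ in Set.Ioo 0 (2*π), g n θ = ∫ θ in (0:ℝ)..(2*π), g n θ := by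
        rw [intervalIntegral.integral_of_le (by positivity),
            MeasureTheory.integral_Ioc_eq_integral_Ioo]
      rw [heq, hgid n]
      rw [show 2*π*C/(R+ε) = 2*π*(C/(R+ε)) by ring]
      exact mul_le_mul_of_nonneg_left hf0 (by positivity)
    -- pointwise limit on the boundary
    have hglim : ∀ θ ∈ Set.Ioo (0:ℝ) (2*π),
        Tendsto (fun n => g n θ) atTop
          (nhds (w₀ (R * (Real.sin θ / (1 - Real.cos θ))))) := by
      intro θ hθ
      have hne : Complex.exp (θ*Complex.I) ≠ 1 := exp_ne_one hθ.1 hθ.2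
      have hmim : (psi R (Complex.exp (θ*Complex.I)) - (ε:ℂ)*Complex.I).im < 0 := by
        have h2 : ((ε:ℂ) * Complex.I).im = ε := by simp
        rw [Complex.sub_im, h2, psi_boundary hθ.1 hθ.2, Complex.ofReal_im]
        linarith
      have hpsC : ContinuousAt (fun w => psi R w - (ε:ℂ)*Complex.I) (Complex.exp (θ*Complex.I)) :=
        ((psi_differentiableAt hne).continuousAt).sub continuousAt_const
      have hF : ContinuousAt f (Complex.exp (θ*Complex.I)) := by
        have hc3 : ContinuousAt (m ∘ fun w => psi R w - (ε:ℂ)*Complex.I)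
            (Complex.exp (θ*Complex.I)) :=
          ContinuousAt.comp (hm _ hmim).continuousAt hpsC
        exact hc3
      have htend : Tendsto (fun n => (ρ n : ℂ) * Complex.exp (θ*Complex.I)) atTop
          (nhds (Complex.exp (θ*Complex.I))) := by
        have h1 : Tendsto (fun n => ((ρ n : ℝ) : ℂ)) atTop (nhds ((1:ℝ):ℂ)) :=
          (Complex.continuous_ofReal.continuousAt.tendsto).comp hρlim
        have h2 := h1.mul_const (Complex.exp (θ*Complex.I))
        simpa using h2
      have h3 : Tendsto (fun n => f ((ρ n : ℂ) * Complex.exp (θ*Complex.I))) atTop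
          (nhds (f (Complex.exp (θ*Complex.I)))) := hF.tendsto.comp htend
      have h4 : Tendsto (fun n => g n θ) atTop (nhds (-(f (Complex.exp (θ*Complex.I))).im)) :=
        ((Complex.continuous_im.continuousAt.tendsto).comp h3).neg
      have h5 : -(f (Complex.exp (θ*Complex.I))).im
          = w₀ (R * (Real.sin θ / (1 - Real.cos θ))) := by
        simp only [hfdef, hw₀]
        rw [psi_boundary hθ.1 hθ.2]
      rwa [h5] at h4
    -- Fatou
    have hFatou : (∫⁻ θ in Set.Ioo 0 (2*π),
        ENNReal.ofReal (w₀ (R * (Real.sin θ / (1 - Real.cos θ)))))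
        ≤ ENNReal.ofReal (2*π*C/(R+ε)) := by
      have hmeas : ∀ n, Measurable fun θ => ENNReal.ofReal (g n θ) :=
        fun n => ((hgcont n).measurable).ennreal_ofReal
      have hfat := MeasureTheory.lintegral_liminf_le
        (μ := volume.restrict (Set.Ioo 0 (2*π))) (u := atTop) hmeas
      have hcongr : (∫⁻ θ in Set.Ioo 0 (2*π),
            ENNReal.ofReal (w₀ (R * (Real.sin θ / (1 - Real.cos θ)))))
          = ∫⁻ θ in Set.Ioo 0 (2*π), liminf (fun n => ENNReal.ofReal (g n θ)) atTop := by
        apply setLIntegral_congr_fun measurableSet_Ioo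
        intro θ hθ
        have h1 : Tendsto (fun n => ENNReal.ofReal (g n θ)) atTop
            (nhds (ENNReal.ofReal (w₀ (R * (Real.sin θ / (1 - Real.cos θ)))))) :=
          (ENNReal.continuous_ofReal.continuousAt.tendsto).comp (hglim θ hθ)
        exact h1.liminf_eq.symm
      rw [hcongr]
      refine le_trans hfat ?_
      have h2 : liminf (fun n => ∫⁻ θ in Set.Ioo 0 (2*π), ENNReal.ofReal (g n θ)) atTop
          ≤ liminf (fun _ : ℕ => ENNReal.ofReal (2*π*C/(R+ε))) atTop :=
        Filter.liminf_le_liminf (Filter.Eventually.of_forall hIoo)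
      rwa [Filter.liminf_const] at h2
    -- change of variables
    set xR : ℝ → ℝ := fun θ => R * (Real.sin θ / (1 - Real.cos θ)) with hxRdef
    have hXd : ∀ θ ∈ Set.Ioo (0:ℝ) (2*π), HasDerivAt xR (-R/(1 - Real.cos θ)) θ := by
      intro θ hθ
      have hc := one_sub_cos_pos hθ.1 hθ.2
      have h1 : HasDerivAt (fun θ : ℝ => 1 - Real.cos θ) (Real.sin θ) θ := by
        simpa using (Real.hasDerivAt_cos θ).const_sub 1
      have h2 : HasDerivAt (fun θ => Real.sin θ / (1 - Real.cos θ))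
          ((Real.cos θ * (1 - Real.cos θ) - Real.sin θ * Real.sin θ)/(1 - Real.cos θ)^2) θ :=
        (Real.hasDerivAt_sin θ).div h1 hc.ne'
      have h3 := h2.const_mul R
      refine h3.congr_deriv ?_
      field_simp [hc.ne']
      linear_combination (-1) * (Real.sin_sq_add_cos_sq θ)
    have hXinj : Set.InjOn xR (Set.Ioo 0 (2*π)) := by
      have hXanti : StrictAntiOn xR (Set.Ioo 0 (2*π)) := by
        apply strictAntiOn_of_deriv_neg (convex_Ioo _ _)
        · intro θ hθ
          exact ((hXd θ hθ).continuousAt).continuousWithinAt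
        · intro θ hθ
          rw [interior_Ioo] at hθ
          rw [(hXd θ hθ).deriv]
          have hc := one_sub_cos_pos hθ.1 hθ.2
          exact div_neg_of_neg_of_pos (by linarith) hc
      exact hXanti.injOn
    have hXimg : xR '' (Set.Ioo 0 (2*π)) = Set.univ := by
      apply Set.eq_univ_of_forall
      intro x
      have hπ := Real.pi_pos
      have ha1 := Real.arctan_lt_pi_div_two (x/R)
      have ha2 := Real.neg_pi_div_two_lt_arctan (x/R)
      refine ⟨π - 2 * Real.arctan (x/R), ⟨by linarith, by linarith⟩, ?_⟩
      set a := Real.arctan (x/R) with hadef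
      have hcosa : 0 < Real.cos a := Real.cos_arctan_pos _
      have hs : Real.sin a = x/R * Real.cos a := by
        have htan : Real.tan a = x/R := Real.tan_arctan _
        rw [Real.tan_eq_sin_div_cos] at htan
        field_simp at htan
        rw [div_mul_eq_mul_div, eq_div_iff hR.ne']
        linarith
      show R * (Real.sin (π - 2*a) / (1 - Real.cos (π - 2*a))) = x
      rw [Real.sin_pi_sub, Real.cos_pi_sub, Real.sin_two_mul, Real.cos_two_mul]
      rw [show (1:ℝ) - -(2 * Real.cos a ^ 2 - 1) = 2 * Real.cos a ^ 2 by ring]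
      rw [hs]
      field_simp
    have hcov := lintegral_image_eq_lintegral_abs_det_fderiv_mul volume measurableSet_Ioo
        (f' := fun θ : ℝ => ContinuousLinearMap.smulRight (1 : ℝ →L[ℝ] ℝ) (-R/(1 - Real.cos θ)))
        (fun θ hθ => ((hXd θ hθ).hasDerivWithinAt).hasFDerivWithinAt) hXinj
        (fun x => ENNReal.ofReal (w₀ x) * ENNReal.ofReal (2*R/(x^2+R^2)))
    rw [hXimg, MeasureTheory.Measure.restrict_univ] at hcov
    rw [hcov]
    have hident : ∀ θ ∈ Set.Ioo (0:ℝ) (2*π),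
        ENNReal.ofReal |(ContinuousLinearMap.smulRight (1 : ℝ →L[ℝ] ℝ)
            (-R/(1 - Real.cos θ))).det|
          * (ENNReal.ofReal (w₀ (xR θ)) * ENNReal.ofReal (2*R/((xR θ)^2+R^2)))
        = ENNReal.ofReal (w₀ (xR θ)) := by
      intro θ hθ
      have hc := one_sub_cos_pos hθ.1 hθ.2
      rw [ContinuousLinearMap.smulRight_one_eq_toSpanSingleton, ContinuousLinearMap.det_toSpanSingleton]
      have habs : |(-R/(1 - Real.cos θ))| = R/(1 - Real.cos θ) := by
        rw [abs_div, abs_neg, abs_of_pos hR, abs_of_pos hc]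
      have hker : (xR θ)^2 + R^2 = 2*R^2/(1 - Real.cos θ) := by
        simp only [hxRdef]
        field_simp
        linear_combination (Real.sin_sq_add_cos_sq θ)
      rw [habs, hker]
      rw [show 2*R/(2*R^2/(1 - Real.cos θ)) = (1 - Real.cos θ)/R by
        rw [div_div_eq_mul_div, div_eq_div_iff (by positivity) hR.ne']
        ring]
      rw [mul_comm (ENNReal.ofReal (w₀ (xR θ))) (ENNReal.ofReal ((1 - Real.cos θ)/R)),
        ← mul_assoc, ← ENNReal.ofReal_mul (by positivity)]
      rw [show R/(1 - Real.cos θ) * ((1 - Real.cos θ)/R) = 1 by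
        field_simp]
      simp
    rw [setLIntegral_congr_fun measurableSet_Ioo hident]
    exact hFatou
  -- MCT step
  have hkermeas : ∀ n : ℕ, Measurable fun x : ℝ =>
      ENNReal.ofReal (w₀ x) * ENNReal.ofReal (((n:ℝ)+1)^2/(x^2+((n:ℝ)+1)^2)) := by
    intro n
    refine Measurable.mul (f := fun x => ENNReal.ofReal (w₀ x)) (g := fun x => ENNReal.ofReal (((n:ℝ)+1)^2/(x^2+((n:ℝ)+1)^2))) ?_ ?_
    · exact hw₀cont.measurable.ennreal_ofReal
    · apply Measurable.ennreal_ofReal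
      apply Measurable.div measurable_const
      fun_prop
  have main2 : ∀ n : ℕ, (∫⁻ x : ℝ, ENNReal.ofReal (w₀ x)
      * ENNReal.ofReal (((n:ℝ)+1)^2/(x^2+((n:ℝ)+1)^2))) ≤ ENNReal.ofReal (π*C) := by
    intro n
    set R : ℝ := (n:ℝ)+1 with hRdef
    have hR : 0 < R := by positivity
    have h1 := main R hR
    have h2 := mul_le_mul_right h1 (ENNReal.ofReal (R/2))
    rw [← MeasureTheory.lintegral_const_mul' _ _ ENNReal.ofReal_ne_top] at h2
    have hL : ∀ x : ℝ, ENNReal.ofReal (R/2)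
        * (ENNReal.ofReal (w₀ x) * ENNReal.ofReal (2*R/(x^2+R^2)))
        = ENNReal.ofReal (w₀ x) * ENNReal.ofReal (R^2/(x^2+R^2)) := by
      intro x
      have hx : (0:ℝ) < x^2 + R^2 := by positivity
      rw [← mul_assoc, mul_comm (ENNReal.ofReal (R/2)) (ENNReal.ofReal (w₀ x)), mul_assoc,
        ← ENNReal.ofReal_mul (by positivity)]
      congr 1
      rw [show R/2 * (2*R/(x^2+R^2)) = R^2/(x^2+R^2) by
        rw [div_mul_div_comm, div_eq_div_iff (by positivity) hx.ne']
        ring]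
    rw [lintegral_congr hL] at h2
    refine le_trans h2 ?_
    rw [← ENNReal.ofReal_mul (by positivity)]
    apply ENNReal.ofReal_le_ofReal
    rw [show R/2*(2*π*C/(R+ε)) = π*C*(R/(R+ε)) by
      field_simp]
    have hle1 : R/(R+ε) ≤ 1 := by
      rw [div_le_one (by linarith)]
      linarith
    have hπC : 0 ≤ π*C := by positivity
    nlinarith
  have hmono : Monotone (fun n : ℕ => fun x : ℝ =>
      ENNReal.ofReal (w₀ x) * ENNReal.ofReal (((n:ℝ)+1)^2/(x^2+((n:ℝ)+1)^2))) := by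
    intro n k hnk
    intro x
    apply mul_le_mul_right
    apply ENNReal.ofReal_le_ofReal
    have h1 : ((n:ℝ)+1) ≤ ((k:ℝ)+1) := by
      have : (n:ℝ) ≤ (k:ℝ) := Nat.cast_le.mpr hnk
      linarith
    have hn0 : (0:ℝ) < (n:ℝ)+1 := by positivity
    have hk0 : (0:ℝ) < (k:ℝ)+1 := by positivity
    have h2 : ((n:ℝ)+1)^2 ≤ ((k:ℝ)+1)^2 := by nlinarith
    rw [div_le_div_iff₀ (by positivity) (by positivity)]
    nlinarith [sq_nonneg x, h2]
  have hsup : ∀ x : ℝ, (⨆ n : ℕ, ENNReal.ofReal (w₀ x)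
      * ENNReal.ofReal (((n:ℝ)+1)^2/(x^2+((n:ℝ)+1)^2))) = ENNReal.ofReal (w₀ x) := by
    intro x
    have hker : Tendsto (fun n : ℕ => ((n:ℝ)+1)^2/(x^2+((n:ℝ)+1)^2)) atTop (nhds 1) := by
      have hRn : Tendsto (fun n : ℕ => ((n:ℝ)+1)^2) atTop atTop := by
        have h1 : Tendsto (fun n : ℕ => (n:ℝ)+1) atTop atTop :=
          tendsto_atTop_add_const_right _ 1 tendsto_natCast_atTop_atTop
        exact (tendsto_pow_atTop (by norm_num)).comp h1
      have hpos : ∀ n : ℕ, (0:ℝ) < x^2 + ((n:ℝ)+1)^2 := fun n => by positivity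
      have hsmall : Tendsto (fun n : ℕ => x^2/(x^2+((n:ℝ)+1)^2)) atTop (nhds 0) := by
        have hup : ∀ n : ℕ, x^2/(x^2+((n:ℝ)+1)^2) ≤ x^2 * (((n:ℝ)+1)^2)⁻¹ := by
          intro n
          rw [div_eq_mul_inv]
          apply mul_le_mul_of_nonneg_left _ (sq_nonneg x)
          apply inv_anti₀ (by positivity)
          nlinarith [sq_nonneg x]
        have hlo : ∀ n : ℕ, (0:ℝ) ≤ x^2/(x^2+((n:ℝ)+1)^2) := fun n => by positivity
        have hz : Tendsto (fun n : ℕ => x^2 * (((n:ℝ)+1)^2)⁻¹) atTop (nhds 0) := by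
          have := hRn.inv_tendsto_atTop
          have h2 := this.const_mul (x^2)
          simpa using h2
        exact tendsto_of_tendsto_of_tendsto_of_le_of_le tendsto_const_nhds hz hlo hup
      have h3 : Tendsto (fun n : ℕ => 1 - x^2/(x^2+((n:ℝ)+1)^2)) atTop (nhds 1) := by
        have h4 : Tendsto (fun _ : ℕ => (1:ℝ)) atTop (nhds 1) := tendsto_const_nhds
        have h5 := h4.sub hsmall
        simpa using h5
      apply h3.congr
      intro n
      have := (hpos n).ne'
      field_simp
      ring
    have htend : Tendsto (fun n : ℕ => ENNReal.ofReal (w₀ x)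
        * ENNReal.ofReal (((n:ℝ)+1)^2/(x^2+((n:ℝ)+1)^2))) atTop
        (nhds (ENNReal.ofReal (w₀ x))) := by
      have h1 : Tendsto (fun n : ℕ => ENNReal.ofReal (((n:ℝ)+1)^2/(x^2+((n:ℝ)+1)^2))) atTop
          (nhds (ENNReal.ofReal 1)) :=
        (ENNReal.continuous_ofReal.continuousAt.tendsto).comp hker
      have h2 := ENNReal.Tendsto.const_mul (a := ENNReal.ofReal (w₀ x)) h1
        (Or.inr ENNReal.ofReal_ne_top)
      simpa using h2
    exact tendsto_nhds_unique (tendsto_atTop_iSup (fun a b h => hmono h x)) htend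
  calc (∫⁻ x : ℝ, ENNReal.ofReal (w₀ x))
      = ∫⁻ x : ℝ, ⨆ n : ℕ, ENNReal.ofReal (w₀ x)
          * ENNReal.ofReal (((n:ℝ)+1)^2/(x^2+((n:ℝ)+1)^2)) :=
        lintegral_congr fun x => (hsup x).symm
    _ = ⨆ n : ℕ, ∫⁻ x : ℝ, ENNReal.ofReal (w₀ x)
          * ENNReal.ofReal (((n:ℝ)+1)^2/(x^2+((n:ℝ)+1)^2)) :=
        lintegral_iSup hkermeas hmono
    _ ≤ ENNReal.ofReal (π*C) := iSup_le main2


end HardyAux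

end HardyAux
/-- Hardy-class estimate: `sup_{ε>0} ∫_ℝ ‖Γ(A-k+iε)⁻¹ u‖² dk ≤ 2π ‖u‖²`, and
`z ↦ Γ(A-z)⁻¹ u` is analytic on the lower half-plane (so it lies in `H₂⁻(E)`). -/
theorem hardy_class_estimate
    {E : Type*} [NormedAddCommGroup E] [InnerProductSpace ℂ E] [CompleteSpace E]
    (A : H →ₗ.[ℂ] H) (hA : IsMaxDissipative A)
    (Γ : A.domain →ₗ[ℂ] E)
    (hΓb : ∃ C : ℝ, ∀ u : A.domain, ‖Γ u‖ ≤ C * (‖(u : H)‖ + ‖A u‖))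
    (hΓd : DenseRange Γ)
    (hLag : ∀ u v : A.domain, ⟪(v : H), A u⟫ - ⟪A v, (u : H)⟫ = Complex.I * ⟪Γ v, Γ u⟫)
    (R : ℂ → H →L[ℂ] H) (hR : ∀ z : ℂ, z.im < 0 → IsResolventAt A z (R z))
    (G : ℂ → H →L[ℂ] E)   -- `G z = Γ (A - z)⁻¹`
    (hG : ∀ z : ℂ, z.im < 0 → ∀ u : A.domain, G z (A u - z • (u : H)) = Γ u)
    (u : H) :
    (∀ ε : ℝ, 0 < ε →
      (∫⁻ k : ℝ, ENNReal.ofReal (‖G ((k : ℂ) - ε * Complex.I) u‖ ^ 2))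
        ≤ ENNReal.ofReal (2 * Real.pi * ‖u‖ ^ 2)) ∧
    DifferentiableOn ℂ (fun z : ℂ => G z u) {z : ℂ | z.im < 0} := by
  have hself : ∀ x : H, (⟪x, x⟫) = ((‖x‖^2 : ℝ) : ℂ) := by
    intro x
    rw [← inner_self_ofReal_re, inner_self_eq_norm_sq]; rfl
  -- basic dissipativity estimate
  have hIm_inner : ∀ (z : ℂ) (v : A.domain),
      (-z.im) * ‖(v:H)‖^2 ≤ ‖(v:H)‖ * ‖A v - z • (v:H)‖ := by
    intro z v
    have hd := hA.1.2 v
    have h1 : ⟪(v:H), A v - z • (v:H)⟫ = ⟪(v:H), A v⟫ - z * ((‖(v:H)‖^2 : ℝ) : ℂ) := by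
      rw [inner_sub_right, inner_smul_right, hself]
    have h2 : (⟪(v:H), A v - z • (v:H)⟫).im = (⟪(v:H), A v⟫).im - z.im * ‖(v:H)‖^2 := by
      rw [h1, Complex.sub_im, Complex.mul_im]
      simp [← Complex.ofReal_pow]
    have h3 : (-z.im) * ‖(v:H)‖^2 ≤ (⟪(v:H), A v - z • (v:H)⟫).im := by
      rw [h2]; nlinarith
    have h5 := Complex.abs_im_le_norm ⟪(v:H), A v - z • (v:H)⟫
    have h6 := norm_inner_le_norm (𝕜 := ℂ) (v:H) (A v - z • (v:H))
    have h7 : (⟪(v:H), A v - z • (v:H)⟫).im ≤ ‖(v:H)‖ * ‖A v - z • (v:H)‖ :=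
      ((le_abs_self _).trans h5).trans h6
    linarith
  -- resolvent norm bound
  have hRnorm : ∀ z : ℂ, z.im < 0 → ∀ h : H, ‖R z h‖ ≤ ‖h‖ / (-z.im) := by
    intro z hz h
    obtain ⟨v, hv1, hv2⟩ := (hR z hz).2 h
    rw [← hv1]
    have key := hIm_inner z v
    rw [hv2] at key
    rcases eq_or_lt_of_le (norm_nonneg (v:H)) with h0 | h0
    · rw [← h0]
      apply div_nonneg (norm_nonneg h) (by linarith)
    · rw [le_div_iff₀ (by linarith)]
      nlinarith
  -- Lagrange identity specialization
  have hGammaSq : ∀ v : A.domain, (‖Γ v‖^2 : ℝ) = 2 * (⟪(v:H), A v⟫).im := by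
    intro v
    have h1 := hLag v v
    have h2 : ⟪(A v : H), (v:H)⟫ = (starRingEnd ℂ) ⟪(v:H), A v⟫ := (inner_conj_symm _ _).symm
    have h3 : ⟪Γ v, Γ v⟫ = ((‖Γ v‖^2 : ℝ) : ℂ) := by
      rw [← inner_self_ofReal_re, inner_self_eq_norm_sq]; rfl
    rw [h2, h3] at h1
    have h4 := congrArg Complex.im h1
    simp only [Complex.sub_im, Complex.conj_im, Complex.mul_im, Complex.I_re, Complex.I_im,
      Complex.ofReal_re, Complex.ofReal_im, one_mul, zero_mul, mul_zero, add_zero, zero_add] at h4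
    linarith
  -- G value on solutions
  have hGval : ∀ z : ℂ, z.im < 0 → ∀ (h : H) (v : A.domain),
      A v - z • (v:H) = h → G z h = Γ v := by
    intro z hz h v hv
    rw [← hv]; exact hG z hz v
  -- the main pointwise identity
  have hGsq : ∀ z : ℂ, z.im < 0 → ∀ h : H,
      ‖G z h‖^2 = -2 * (⟪h, R z h⟫).im + 2*z.im*‖R z h‖^2 := by
    intro z hz h
    obtain ⟨v, hv1, hv2⟩ := (hR z hz).2 h
    rw [hGval z hz h v hv2, hGammaSq v]
    have hAv : (A v : H) = h + z • (v:H) := by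
      rw [← hv2]; abel
    have h5 : ⟪(v:H), (A v : H)⟫ = ⟪(v:H), h⟫ + z * ((‖(v:H)‖^2 : ℝ) : ℂ) := by
      rw [hAv, inner_add_right, inner_smul_right, hself]
    have h6 : (⟪(v:H), A v⟫).im = (⟪(v:H), h⟫).im + z.im * ‖(v:H)‖^2 := by
      rw [h5, Complex.add_im, Complex.mul_im]
      simp [← Complex.ofReal_pow]
    have h7 : (⟪(v:H), h⟫).im = -(⟪h, (v:H)⟫).im := by
      rw [← inner_conj_symm (v:H) h, Complex.conj_im]
    rw [h6, h7, hv1]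
    ring
  -- consequences
  have hmIm : ∀ z : ℂ, z.im < 0 → ∀ h : H, (⟪h, R z h⟫).im ≤ 0 := by
    intro z hz h
    have h1 := hGsq z hz h
    nlinarith [sq_nonneg (‖G z h‖), sq_nonneg (‖R z h‖)]
  have hGle : ∀ z : ℂ, z.im < 0 → ∀ h : H, ‖G z h‖^2 ≤ 2*(-(⟪h, R z h⟫).im) := by
    intro z hz h
    have h1 := hGsq z hz h
    nlinarith [sq_nonneg (‖R z h‖)]
  have hGnorm2 : ∀ z : ℂ, z.im < 0 → ∀ h : H, ‖G z h‖^2 ≤ 2*‖h‖^2/(-z.im) := by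
    intro z hz h
    have h1 := hGle z hz h
    have h2 : -(⟪h, R z h⟫).im ≤ ‖h‖ * ‖R z h‖ := by
      have h3 := Complex.abs_im_le_norm ⟪h, R z h⟫
      have h4 := norm_inner_le_norm (𝕜 := ℂ) h (R z h)
      have h5 : -(⟪h, R z h⟫).im ≤ |(⟪h, R z h⟫).im| := neg_le_abs _
      linarith
    have h6 := hRnorm z hz h
    have h7 : ‖h‖ * ‖R z h‖ ≤ ‖h‖ * (‖h‖/(-z.im)) :=
      mul_le_mul_of_nonneg_left h6 (norm_nonneg h)
    have h8 : ‖h‖ * (‖h‖/(-z.im)) = ‖h‖^2/(-z.im) := by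
      rw [mul_div_assoc']; ring_nf
    have h9 : 2*‖h‖^2/(-z.im) = 2*(‖h‖^2/(-z.im)) := by ring
    linarith
  -- resolvent identity
  have hres : ∀ z w : ℂ, z.im < 0 → w.im < 0 → ∀ h : H,
      R z h - R w h = (z - w) • R z (R w h) := by
    intro z w hz hw h
    obtain ⟨vz, hvz1, hvz2⟩ := (hR z hz).2 h
    obtain ⟨vw, hvw1, hvw2⟩ := (hR w hw).2 h
    have hc : ((vz - vw : A.domain) : H) = (vz:H) - (vw:H) := rfl
    have hsub : A (vz - vw) - z • ((vz - vw : A.domain) : H) = (z - w) • (vw : H) := by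
      rw [LinearPMap.map_sub, hc]
      have h1 : (A vz : H) = h + z • (vz:H) := by rw [← hvz2]; abel
      have h2 : (A vw : H) = h + w • (vw:H) := by rw [← hvw2]; abel
      rw [h1, h2]
      rw [smul_sub, sub_smul]
      abel
    have hkey := (hR z hz).1 (vz - vw)
    rw [hsub] at hkey
    have hL : R z ((z - w) • (vw:H)) = (z - w) • R z ((vw:H)) := (R z).map_smul _ _
    rw [hL, hc] at hkey
    rw [← hvz1, ← hvw1, ← hkey, hvw1]
  -- G-resolvent identity
  have hGres : ∀ z w : ℂ, z.im < 0 → w.im < 0 → ∀ h : H,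
      G z h - G w h = (z - w) • G z (R w h) := by
    intro z w hz hw h
    obtain ⟨vz, hvz1, hvz2⟩ := (hR z hz).2 h
    obtain ⟨vw, hvw1, hvw2⟩ := (hR w hw).2 h
    have hc : ((vz - vw : A.domain) : H) = (vz:H) - (vw:H) := rfl
    have hsub : A (vz - vw) - z • ((vz - vw : A.domain) : H) = (z - w) • (vw : H) := by
      rw [LinearPMap.map_sub, hc]
      have h1 : (A vz : H) = h + z • (vz:H) := by rw [← hvz2]; abel
      have h2 : (A vw : H) = h + w • (vw:H) := by rw [← hvw2]; abel
      rw [h1, h2]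
      rw [smul_sub, sub_smul]
      abel
    have hkey := hG z hz (vz - vw)
    rw [hsub] at hkey
    have hmap : Γ (vz - vw) = Γ vz - Γ vw := map_sub Γ _ _
    have hL : G z ((z - w) • (vw:H)) = (z - w) • G z ((vw:H)) := (G z).map_smul _ _
    rw [hL, hmap] at hkey
    rw [hGval z hz h vz hvz2, hGval w hw h vw hvw2, ← hkey, hvw1]
  -- geometry of the half-disc around w
  have hgeo : ∀ w : ℂ, w.im < 0 → ∀ z : ℂ, dist z w < -w.im/2 →
      z.im < 0 ∧ -w.im/2 < -z.im := by
    intro w hw z hzd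
    have h1 : |z.im - w.im| ≤ dist z w := by
      have h2 := Complex.abs_im_le_norm (z - w)
      rw [Complex.sub_im] at h2
      rw [Complex.dist_eq]
      exact h2
    have h3 : z.im - w.im < -w.im/2 := lt_of_le_of_lt (le_abs_self _) (lt_of_le_of_lt h1 hzd)
    constructor <;> linarith
  -- continuity of the resolvent in z
  have hRcont : ∀ w : ℂ, w.im < 0 → ∀ q : H, ContinuousAt (fun z => R z q) w := by
    intro w hw q
    apply continuousAt_of_locally_lipschitz (show (0:ℝ) < -w.im/2 by linarith)
      (2*‖R w q‖/(-w.im))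
    intro z hzd
    obtain ⟨hz0, hz1⟩ := hgeo w hw z hzd
    have hid := hres z w hz0 hw q
    rw [dist_eq_norm, dist_eq_norm]
    calc ‖R z q - R w q‖ = ‖(z - w) • R z (R w q)‖ := by rw [hid]
      _ = ‖z - w‖ * ‖R z (R w q)‖ := norm_smul _ _
      _ ≤ ‖z - w‖ * (2*‖R w q‖/(-w.im)) := by
          apply mul_le_mul_of_nonneg_left _ (norm_nonneg _)
          have h2 := hRnorm z hz0 (R w q)
          have h3 : ‖R w q‖/(-z.im) ≤ ‖R w q‖/(-w.im/2) :=
            div_le_div_of_nonneg_left (norm_nonneg _) (by linarith) hz1.le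
          have h4 : ‖R w q‖/(-w.im/2) = 2*‖R w q‖/(-w.im) := by
            rw [div_div_eq_mul_div]
            ring_nf
          linarith
      _ = (2*‖R w q‖/(-w.im)) * ‖z - w‖ := mul_comm _ _
  -- continuity of G in z
  have hGcont : ∀ w : ℂ, w.im < 0 → ∀ q : H, ContinuousAt (fun z => G z q) w := by
    intro w hw q
    apply continuousAt_of_locally_lipschitz (show (0:ℝ) < -w.im/2 by linarith)
      (Real.sqrt (4*‖R w q‖^2/(-w.im)))
    intro z hzd
    obtain ⟨hz0, hz1⟩ := hgeo w hw z hzd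
    have hid := hGres z w hz0 hw q
    rw [dist_eq_norm, dist_eq_norm]
    have hb : ‖G z (R w q)‖ ≤ Real.sqrt (4*‖R w q‖^2/(-w.im)) := by
      have h1 := hGnorm2 z hz0 (R w q)
      have h3 : 2*‖R w q‖^2/(-z.im) ≤ 2*‖R w q‖^2/(-w.im/2) :=
        div_le_div_of_nonneg_left (by positivity) (by linarith) hz1.le
      have h4 : 2*‖R w q‖^2/(-w.im/2) = 4*‖R w q‖^2/(-w.im) := by
        rw [div_div_eq_mul_div]
        ring_nf
      have h5 : ‖G z (R w q)‖ = Real.sqrt (‖G z (R w q)‖^2) :=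
        (Real.sqrt_sq (norm_nonneg _)).symm
      rw [h5]
      exact Real.sqrt_le_sqrt (by linarith)
    calc ‖G z q - G w q‖ = ‖(z - w) • G z (R w q)‖ := by rw [hid]
      _ = ‖z - w‖ * ‖G z (R w q)‖ := norm_smul _ _
      _ ≤ ‖z - w‖ * Real.sqrt (4*‖R w q‖^2/(-w.im)) :=
          mul_le_mul_of_nonneg_left hb (norm_nonneg _)
      _ = Real.sqrt (4*‖R w q‖^2/(-w.im)) * ‖z - w‖ := mul_comm _ _
  have hopen : IsOpen {z : ℂ | z.im < 0} := isOpen_lt Complex.continuous_im continuous_const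
  -- derivative of z ↦ G z u
  have hGdiff : ∀ w : ℂ, w.im < 0 → HasDerivAt (fun z => G z u) (G w (R w u)) w := by
    intro w hw
    rw [hasDerivAt_iff_tendsto_slope]
    have hmem : {z : ℂ | z.im < 0} ∩ {w}ᶜ ∈ nhdsWithin w {w}ᶜ :=
      Filter.inter_mem (mem_nhdsWithin_of_mem_nhds (hopen.mem_nhds hw)) self_mem_nhdsWithin
    have hev : (fun z => G z (R w u)) =ᶠ[nhdsWithin w {w}ᶜ] slope (fun z => G z u) w := by
      filter_upwards [hmem] with z hz
      obtain ⟨hz0, hzw⟩ := hz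
      have hzw' : z - w ≠ 0 := sub_ne_zero.mpr hzw
      rw [slope_def_module, hGres z w hz0 hw u, smul_smul, inv_mul_cancel₀ hzw', one_smul]
    refine Filter.Tendsto.congr' hev ?_
    exact ((hGcont w hw (R w u)).tendsto).mono_left nhdsWithin_le_nhds
  -- the Weyl-type function
  set msc : ℂ → ℂ := fun z => ⟪u, R z u⟫ with hmsc
  have hmdiff : ∀ w : ℂ, w.im < 0 → HasDerivAt msc (⟪u, R w (R w u)⟫) w := by
    intro w hw
    rw [hasDerivAt_iff_tendsto_slope]
    have hmem : {z : ℂ | z.im < 0} ∩ {w}ᶜ ∈ nhdsWithin w {w}ᶜ :=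
      Filter.inter_mem (mem_nhdsWithin_of_mem_nhds (hopen.mem_nhds hw)) self_mem_nhdsWithin
    have hev : (fun z => (⟪u, R z (R w u)⟫ : ℂ)) =ᶠ[nhdsWithin w {w}ᶜ] slope msc w := by
      filter_upwards [hmem] with z hz
      obtain ⟨hz0, hzw⟩ := hz
      have hzw' : z - w ≠ 0 := sub_ne_zero.mpr hzw
      rw [slope_def_module]
      have h1 : msc z - msc w = (z - w) * ⟪u, R z (R w u)⟫ := by
        rw [hmsc]
        rw [show (fun z => (⟪u, R z u⟫ : ℂ)) z - (fun z => (⟪u, R z u⟫ : ℂ)) w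
            = ⟪u, R z u - R w u⟫ from (inner_sub_right _ _ _).symm]
        rw [hres z w hz0 hw u, inner_smul_right]
      rw [h1, smul_eq_mul, ← mul_assoc, inv_mul_cancel₀ hzw', one_mul]
    refine Filter.Tendsto.congr' hev ?_
    have hcont : ContinuousAt (fun z => (⟪u, R z (R w u)⟫ : ℂ)) w := by
      have h1 := hRcont w hw (R w u)
      have h2 : ContinuousAt (fun y : H => (⟪u, y⟫ : ℂ)) (R w (R w u)) :=
        (innerSL ℂ u).continuous.continuousAt
      have h3 : ContinuousAt ((fun y : H => (⟪u, y⟫ : ℂ)) ∘ fun z => R z (R w u)) w :=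
        ContinuousAt.comp h2 h1
      exact h3
    exact hcont.tendsto.mono_left nhdsWithin_le_nhds
  have hmbd : ∀ z : ℂ, z.im < 0 → ‖msc z‖ ≤ ‖u‖^2 / (-z.im) := by
    intro z hz
    have h1 := norm_inner_le_norm (𝕜 := ℂ) u (R z u)
    have h2 := hRnorm z hz u
    calc ‖msc z‖ ≤ ‖u‖ * ‖R z u‖ := h1
      _ ≤ ‖u‖ * (‖u‖/(-z.im)) := mul_le_mul_of_nonneg_left h2 (norm_nonneg u)
      _ = ‖u‖^2/(-z.im) := by rw [mul_div_assoc']; ring_nf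
  refine ⟨?_, ?_⟩
  · intro ε hε
    have hP := HardyAux.poisson_bound (m := msc) (C := ‖u‖^2)
      (fun z hz => (hmdiff z hz).differentiableAt)
      (fun z hz => hmIm z hz u) hmbd hε
    calc ∫⁻ k : ℝ, ENNReal.ofReal (‖G ((k:ℂ) - ε*Complex.I) u‖^2)
        ≤ ∫⁻ k : ℝ, ENNReal.ofReal (2 * (-(msc ((k:ℂ) - ε*Complex.I)).im)) := by
          apply lintegral_mono
          intro k
          apply ENNReal.ofReal_le_ofReal
          have hzim : ((k:ℂ) - ε*Complex.I).im < 0 := by simp [hε]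
          have := hGle _ hzim u
          simpa [hmsc] using this
      _ = ∫⁻ k : ℝ, ENNReal.ofReal 2 * ENNReal.ofReal (-(msc ((k:ℂ) - ε*Complex.I)).im) := by
          apply lintegral_congr
          intro k
          rw [← ENNReal.ofReal_mul (by norm_num)]
      _ = ENNReal.ofReal 2 * ∫⁻ k : ℝ, ENNReal.ofReal (-(msc ((k:ℂ) - ε*Complex.I)).im) :=
          lintegral_const_mul' _ _ ENNReal.ofReal_ne_top
      _ ≤ ENNReal.ofReal 2 * ENNReal.ofReal (Real.pi * ‖u‖^2) := mul_le_mul_right hP _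
      _ = ENNReal.ofReal (2*Real.pi*‖u‖^2) := by
          rw [← ENNReal.ofReal_mul (by norm_num)]
          ring_nf
  · intro w hw
    have hw' : w.im < 0 := hw
    exact ((hGdiff w hw').differentiableAt).differentiableWithinAt
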